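/- Let (c_n) be a decreasing sequence in [c_lo, c_hi] satisfying c_n * n * F(c_n) = V * (1 - (1 - q*F(c_n))^n) for all n, where F is a continuous strictly increasing cdf on [c_lo, c_hi] with F(c_lo) = 0, V > 0, q ∈ (0,1], and c_lo ≥ 0. Then c_n → c_lo as n → ∞. -/
import Mathlib


theorem stmt_12 (V q clo chi : ℝ) (F : ℝ → ℝ) (c : ℕ → ℝ)
    (hV : 0 < V) (hq0 : 0 < q) (hq1 : q ≤ 1) (hclo : 0 ≤ clo) (hlt : clo < chi)
    (hFcont : ContinuousOn F (Set.Icc clo chi))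
    (hFmono : StrictMonoOn F (Set.Icc clo chi))
    (hFlo : F clo = 0)
    (hmem : ∀ n, c n ∈ Set.Icc clo chi)
    (hdec : Antitone c)
    (heq : ∀ n : ℕ, 1 ≤ n → c n * n * F (c n) = V * (1 - (1 - q * F (c n)) ^ n)) :
    Filter.Tendsto c Filter.atTop (nhds clo) := by
  have hbdd : BddBelow (Set.range c) := ⟨clo, by rintro x ⟨n, rfl⟩; exact (hmem n).1⟩
  have htend : Filter.Tendsto c Filter.atTop (nhds (⨅ n, c n)) :=
    tendsto_atTop_ciInf hdec hbdd
  set L := ⨅ n, c n with hL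
  have hcloL : clo ≤ L := le_ciInf fun n => (hmem n).1
  have hLle : ∀ n, L ≤ c n := fun n => ciInf_le hbdd n
  have hLchi : L ≤ chi := (hLle 0).trans (hmem 0).2
  have hLmem : L ∈ Set.Icc clo chi := ⟨hcloL, hLchi⟩
  suffices h : L = clo by rwa [h] at htend
  by_contra hne
  have hLgt : clo < L := lt_of_le_of_ne hcloL (Ne.symm hne)
  have hFL : 0 < F L := by
    have := hFmono (Set.left_mem_Icc.mpr hlt.le) hLmem hLgt
    rwa [hFlo] at this
  have hLpos : 0 < L := lt_of_le_of_lt hclo hLgt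
  have hprod : 0 < L * F L := mul_pos hLpos hFL
  obtain ⟨N, hN⟩ := exists_nat_gt (V / (L * F L))
  set n := 2 * N + 2 with hn
  have hn1 : 1 ≤ n := by omega
  have hNn : (N : ℝ) ≤ (n : ℝ) := by
    have : N ≤ n := by omega
    exact_mod_cast this
  have hngt : V < (n : ℝ) * (L * F L) := by
    have h1 : V / (L * F L) < (n : ℝ) := lt_of_lt_of_le hN hNn
    calc V = (V / (L * F L)) * (L * F L) := by field_simp
    _ < (n : ℝ) * (L * F L) := mul_lt_mul_of_pos_right h1 hprod
  have hFcn : F L ≤ F (c n) := hFmono.monotoneOn hLmem (hmem n) (hLle n)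
  have hcnL : L ≤ c n := hLle n
  have hlhs : (n : ℝ) * (L * F L) ≤ c n * n * F (c n) := by
    have h1 : (0:ℝ) ≤ (n : ℝ) := Nat.cast_nonneg n
    have h2 : L * F L ≤ c n * F (c n) :=
      mul_le_mul hcnL hFcn hFL.le (hLpos.le.trans hcnL)
    nlinarith
  have hpow : (0:ℝ) ≤ (1 - q * F (c n)) ^ n := by
    have hev : Even n := ⟨N + 1, by omega⟩
    exact hev.pow_nonneg _
  have hrhs : V * (1 - (1 - q * F (c n)) ^ n) ≤ V := by nlinarith
  have := heq n hn1
  linarith
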